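/- Let K > 0, let n ≥ 0 and Ric be real numbers, and suppose v : ℝ → ℝ satisfies: the function r ↦ v(r) − K·rⁿ·(1 − (Ric/(6(n+2)))·r²) is O(r^{n+4}) as r → 0 from the right (with rⁿ = exp(n·log r) for r > 0). Then (6(n+2)/r²)·(log K + n·log r − log(v(r))) tends to Ric as r → 0 from the right. -/

import Mathlib

open Real Filter Asymptotics

/-- Consistency of the Ricci curvature estimator: if
`v(r) = K·rⁿ·(1 − (Ric/(6(n+2)))·r²) + O(r^{n+4})` as `r → 0⁺` (with `rⁿ` the real power),
then `(6(n+2)/r²)·(log K + n·log r − log v(r)) → Ric` as `r → 0⁺`. -/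
theorem ricci_estimator_consistent (K n Ric : ℝ) (hK : 0 < K) (hn : 0 ≤ n) (v : ℝ → ℝ)
    (hv : (fun r : ℝ => v r - K * r ^ n * (1 - Ric / (6 * (n + 2)) * r ^ 2))
      =O[nhdsWithin 0 (Set.Ioi 0)] fun r : ℝ => r ^ (n + 4)) :
    Tendsto
      (fun r : ℝ =>
        6 * (n + 2) / r ^ 2 * (Real.log K + n * Real.log r - Real.log (v r)))
      (nhdsWithin 0 (Set.Ioi 0)) (nhds Ric) := by
  set l := nhdsWithin (0:ℝ) (Set.Ioi 0) with hl
  set c : ℝ := Ric / (6 * (n + 2)) with hc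
  have hn2 : (n + 2) ≠ 0 := by positivity
  have hpos : ∀ᶠ r in l, 0 < r := eventually_mem_nhdsWithin
  -- g r : the error term divided by K r^n r^2
  set g : ℝ → ℝ := fun r => (v r - K * r ^ n * (1 - c * r ^ 2)) / (K * r ^ n * r ^ 2)
    with hg
  have hr2tendsto : Tendsto (fun r : ℝ => r ^ 2) l (nhds 0) := by
    have h : Tendsto (fun r : ℝ => r ^ 2) (nhds (0:ℝ)) (nhds 0) := by
      simpa using (continuous_pow 2).tendsto (0:ℝ)
    exact h.mono_left nhdsWithin_le_nhds
  have htg : Tendsto g l (nhds 0) := by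
    have hbig : g =O[l] fun r => K⁻¹ * r ^ 2 := by
      have h1 : g =O[l] fun r => r ^ (n + 4) * (K * r ^ n * r ^ 2)⁻¹ := by
        rw [hg]
        simpa only [div_eq_mul_inv] using
          hv.mul (isBigO_refl (fun r : ℝ => (K * r ^ n * r ^ 2)⁻¹) l)
      refine h1.trans (IsBigO.of_bound 1 ?_)
      filter_upwards [hpos] with r hr
      have hrn : (0:ℝ) < r ^ n := Real.rpow_pos_of_pos hr n
      have h4 : r ^ (n + 4) = r ^ n * r ^ (2:ℕ) * r ^ (2:ℕ) := by
        rw [Real.rpow_add hr]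
        have : r ^ (4:ℝ) = r ^ (4:ℕ) := by
          rw [← Real.rpow_natCast r 4]; norm_num
        rw [this]; ring
      rw [h4]
      have : r ^ n * r ^ 2 * r ^ 2 * (K * r ^ n * r ^ 2)⁻¹ = K⁻¹ * r ^ 2 := by
        field_simp
      rw [this, one_mul]
    have : Tendsto (fun r : ℝ => K⁻¹ * r ^ 2) l (nhds 0) := by
      simpa using hr2tendsto.const_mul K⁻¹
    exact hbig.trans_tendsto this
  set G : ℝ → ℝ := fun r => g r - c with hG
  have htG : Tendsto G l (nhds (-c)) := by
    simpa using htg.sub (tendsto_const_nhds (x := c))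
  set w : ℝ → ℝ := fun r => v r / (K * r ^ n) with hw
  have hweq : w =ᶠ[l] fun r => 1 + G r * r ^ 2 := by
    filter_upwards [hpos] with r hr
    have hrn : (0:ℝ) < r ^ n := Real.rpow_pos_of_pos hr n
    have hr2 : r ^ 2 ≠ 0 := by positivity
    simp only [hw, hG, hg]
    field_simp
    ring
  have hw1 : Tendsto w l (nhds 1) := by
    refine Tendsto.congr' hweq.symm ?_
    have : Tendsto (fun r => 1 + G r * r ^ 2) l (nhds (1 + (-c) * 0)) :=
      tendsto_const_nhds.add (htG.mul hr2tendsto)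
    simpa using this
  have hwpos : ∀ᶠ r in l, 0 < w r := hw1.eventually (eventually_gt_nhds one_pos)
  -- squeeze for log (w r) / r^2
  have hlow : Tendsto (fun r => G r / w r) l (nhds (-c)) := by
    have := htG.div hw1 one_ne_zero; rw [div_one] at this; exact this
  have hsq : Tendsto (fun r => Real.log (w r) / r ^ 2) l (nhds (-c)) := by
    refine tendsto_of_tendsto_of_tendsto_of_le_of_le' hlow htG ?_ ?_
    · filter_upwards [hpos, hwpos, hweq] with r hr hwr heq
      have hr2 : (0:ℝ) < r ^ 2 := by positivity
      have hlogge : 1 - (w r)⁻¹ ≤ Real.log (w r) := Real.one_sub_inv_le_log_of_pos hwr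
      have h1 : G r / w r = (1 - (w r)⁻¹) / r ^ 2 := by
        have hwne : w r ≠ 0 := ne_of_gt hwr
        have : 1 - (w r)⁻¹ = G r * r ^ 2 / w r := by
          field_simp
          linarith [heq]
        rw [this]
        field_simp
      rw [h1]
      exact div_le_div_of_nonneg_right hlogge hr2.le
    · filter_upwards [hpos, hwpos, hweq] with r hr hwr heq
      have hr2 : (0:ℝ) < r ^ 2 := by positivity
      have hlogle : Real.log (w r) ≤ w r - 1 := Real.log_le_sub_one_of_pos hwr
      have : w r - 1 = G r * r ^ 2 := by linarith [heq]
      calc Real.log (w r) / r ^ 2 ≤ (w r - 1) / r ^ 2 :=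
            div_le_div_of_nonneg_right hlogle hr2.le
        _ = G r := by rw [this]; field_simp
  -- conclude
  have hfinal : Tendsto (fun r => -(6 * (n + 2)) * (Real.log (w r) / r ^ 2)) l
      (nhds Ric) := by
    have := hsq.const_mul (-(6 * (n + 2)))
    have hval : -(6 * (n + 2)) * (-c) = Ric := by
      rw [hc]; field_simp
    rwa [hval] at this
  refine Tendsto.congr' ?_ hfinal
  filter_upwards [hpos, hwpos] with r hr hwr
  have hrn : (0:ℝ) < r ^ n := Real.rpow_pos_of_pos hr n
  have hvpos : 0 < v r := by
    have : v r = w r * (K * r ^ n) := by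
      rw [hw]; field_simp
    rw [this]; positivity
  have hlogv : Real.log (v r) = Real.log (w r) + Real.log K + n * Real.log r := by
    have : v r = w r * (K * r ^ n) := by
      rw [hw]; field_simp
    rw [this, Real.log_mul (ne_of_gt hwr) (by positivity),
      Real.log_mul (ne_of_gt hK) (ne_of_gt hrn), Real.log_rpow hr]
    ring
  rw [hlogv]
  ring
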